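/- Suppose that for every ε > 0 and every κ > ω(M) there is a conformal class C on M with Y_C(M) ≥ Y(M) - ε and κ ≤ W_C(M) ≤ κ + ε (Theorem A). Then the closure in ℝ² of the image K(M) = {(Y_C(M), W_C(M)) : C ∈ 𝒞(M)} intersected with the vertical line {y = Y(M)} equals {(Y(M), w) : w ≥ ω(M)}. -/
import Mathlib


open Filter

/-- Corollary B.  `𝒞` is the set of conformal classes on `M`, `Y c` and `W c` the Yamabe
and Weyl constants, `YM = Y(M)` the Yamabe invariant (so `Y c ≤ YM` for all `c`) and
`ω = ω(M)` (so every Yamabe sequence has `liminf W ≥ ω`).  If Theorem A holds — for all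
`ε > 0` and `κ > ω` there is `c` with `Y c ≥ YM - ε` and `κ ≤ W c ≤ κ + ε` — then the
closure of the image `K(M) = {(Y c, W c)}` meets the Sobolev line `{y = YM}` exactly in
`{(YM, w) : w ≥ ω}`. -/
theorem stmt12 {𝒞 : Type*} (Y W : 𝒞 → ℝ) (YM ω : ℝ)
    (hle : ∀ c, Y c ≤ YM)
    (hA : ∀ ε > (0 : ℝ), ∀ κ > ω, ∃ c, YM - ε ≤ Y c ∧ κ ≤ W c ∧ W c ≤ κ + ε)
    (hω : ∀ s : ℕ → 𝒞, Tendsto (fun i => Y (s i)) atTop (nhds YM) →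
      (↑ω : EReal) ≤ Filter.atTop.liminf fun i => ((W (s i) : EReal))) :
    closure {p : ℝ × ℝ | ∃ c, p = (Y c, W c)} ∩ {p : ℝ × ℝ | p.1 = YM} =
      {p : ℝ × ℝ | p.1 = YM ∧ ω ≤ p.2} := by
  have hinv : Tendsto (fun n : ℕ => 1 / (n + 1 : ℝ)) atTop (nhds 0) :=
    tendsto_one_div_add_atTop_nhds_zero_nat
  have hpos : ∀ n : ℕ, (0 : ℝ) < 1 / (n + 1 : ℝ) := fun n => by positivity
  ext p
  simp only [Set.mem_inter_iff, Set.mem_setOf_eq]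
  constructor
  · rintro ⟨hcl, hp1⟩
    refine ⟨hp1, ?_⟩
    obtain ⟨x, hx, hxt⟩ := mem_closure_iff_seq_limit.1 hcl
    choose c hc using hx
    have hY : Tendsto (fun n => Y (c n)) atTop (nhds YM) := by
      have h1 : Tendsto (fun n => (x n).1) atTop (nhds p.1) :=
        (continuous_fst.tendsto p).comp hxt
      rw [hp1] at h1
      exact h1.congr fun n => by rw [hc n]
    have hW : Tendsto (fun n => W (c n)) atTop (nhds p.2) := by
      have h2 : Tendsto (fun n => (x n).2) atTop (nhds p.2) :=
        (continuous_snd.tendsto p).comp hxt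
      exact h2.congr fun n => by rw [hc n]
    have hWe : Tendsto (fun n => ((W (c n) : EReal))) atTop (nhds (p.2 : EReal)) := by
      exact_mod_cast (EReal.tendsto_coe.2 hW)
    have := hω c hY
    rw [hWe.liminf_eq] at this
    exact_mod_cast this
  · rintro ⟨hp1, hp2⟩
    refine ⟨?_, hp1⟩
    have hgt : ∀ n : ℕ, ω < p.2 + 1 / (n + 1 : ℝ) := fun n =>
      lt_of_le_of_lt hp2 (lt_add_of_pos_right _ (hpos n))
    choose c hc1 hc2 hc3 using fun n : ℕ => hA (1 / (n + 1 : ℝ)) (hpos n) _ (hgt n)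
    apply mem_closure_iff_seq_limit.2
    refine ⟨fun n => (Y (c n), W (c n)), fun n => ⟨c n, rfl⟩, ?_⟩
    have hY : Tendsto (fun n => Y (c n)) atTop (nhds YM) := by
      refine tendsto_of_tendsto_of_tendsto_of_le_of_le
        (g := fun n : ℕ => YM - 1 / (n + 1 : ℝ)) (h := fun _ : ℕ => YM)
        ?_ tendsto_const_nhds (fun n => hc1 n) (fun n => hle (c n))
      simpa using tendsto_const_nhds.sub hinv
    have hW : Tendsto (fun n => W (c n)) atTop (nhds p.2) := by
      refine tendsto_of_tendsto_of_tendsto_of_le_of_le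
        (g := fun n : ℕ => p.2 + 1 / (n + 1 : ℝ))
        (h := fun n : ℕ => p.2 + 1 / (n + 1 : ℝ) + 1 / (n + 1 : ℝ))
        ?_ ?_ (fun n => hc2 n) (fun n => hc3 n)
      · simpa using tendsto_const_nhds.add hinv
      · simpa using (tendsto_const_nhds.add hinv).add hinv
    have : p = (YM, p.2) := by ext <;> simp [hp1]
    rw [this]
    exact hY.prodMk_nhds hW
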